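/- Let e₁,…,e_{n+2} be the standard orthonormal basis of ℝ^{n+2}, and for a strictly increasing multi-index I = {i₁<⋯<i_p} let e*_I denote the axis p-form e*_{i₁}∧⋯∧e*_{i_p}. Let φ = e*_J ∧ e*_{n+1} ∧ e*_{n+2} where J = {j₁<⋯<j_{p-2}} ⊂ {1,…,n}, and let ψ = Σ_I c_I e*_I be any p-form whose multi-indices I all satisfy i_p ≤ n (i.e., ψ involves only the first n coordinates). Then the comass satisfies ‖φ + ψ‖* = max{1, ‖ψ‖*}. -/

import Mathlib

/-- The comass of an alternating `p`-form `φ` with respect to a bilinear form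
(inner product) `g`. -/
noncomputable def comass {W : Type*} [AddCommGroup W] [Module ℝ W] {p : ℕ}
    (φ : W [⋀^Fin p]→ₗ[ℝ] ℝ) (g : W →ₗ[ℝ] W →ₗ[ℝ] ℝ) : ℝ :=
  sSup {c | ∃ v : Fin p → W,
    (Matrix.of fun i j : Fin p => g (v i) (v j)).det = 1 ∧ φ v = c}

/-- The standard Euclidean inner product on `ℝⁿ` as a bilinear form. -/
noncomputable def stdG (n : ℕ) : (Fin n → ℝ) →ₗ[ℝ] (Fin n → ℝ) →ₗ[ℝ] ℝ :=
  LinearMap.mk₂ ℝ (fun x y => ∑ i, x i * y i)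
    (fun x₁ x₂ y => by simp [add_mul, Finset.sum_add_distrib])
    (fun c x y => by simp [Finset.mul_sum, mul_assoc])
    (fun x y₁ y₂ => by simp [mul_add, Finset.sum_add_distrib])
    (fun c x y => by
      simp only [Pi.smul_apply, smul_eq_mul, Finset.mul_sum]
      exact Finset.sum_congr rfl fun i _ => by ring)

/-- The axis `p`-form `e*_I = e*_{i₁} ∧ ⋯ ∧ e*_{i_p}` on `ℝⁿ` attached to a
multi-index `I`. -/
noncomputable def axisForm {n p : ℕ} (I : Fin p → Fin n) :
    (Fin n → ℝ) [⋀^Fin p]→ₗ[ℝ] ℝ :=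
  ((Pi.basisFun ℝ (Fin p)).det).compLinearMap (LinearMap.funLeft ℝ ℝ I)

/-- The multi-index `(j₁, …, j_q, n+1, n+2)` (0-indexed: `J` followed by `n` and
`n+1`) defining `φ = e*_J ∧ e*_{n+1} ∧ e*_{n+2}`. -/
def phiIdx (n q : ℕ) (J : Fin q → Fin n) : Fin (q + 2) → Fin (n + 2) :=
  Fin.snoc (Fin.snoc (fun i => Fin.castLE (Nat.le_add_right n 2) (J i))
    (⟨n, by omega⟩ : Fin (n + 2))) (⟨n + 1, by omega⟩ : Fin (n + 2))


open Matrix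

namespace Stmt5Aux

variable {k a b : Type*} [Fintype k] [DecidableEq k] [Fintype a] [DecidableEq a]
  [Fintype b] [DecidableEq b]

lemma psd_det_nonneg {A : Matrix k k ℝ} (h : A.PosSemidef) : 0 ≤ A.det := by
  rw [h.1.det_eq_prod_eigenvalues]
  exact Finset.prod_nonneg fun i _ => by exact_mod_cast h.eigenvalues_nonneg i

lemma herm_transpose {A : Matrix k k ℝ} (h : A.IsHermitian) : Aᵀ = A := by
  rw [← conjTranspose_eq_transpose_of_trivial]; exact h

lemma psd_diag {A : Matrix k k ℝ} (h : A.PosSemidef) (i : k) : 0 ≤ A i i := by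
  have h2 := h.dotProduct_mulVec_nonneg (Pi.single i 1)
  simpa [dotProduct, mulVec, Pi.single_apply, Finset.sum_ite_eq, mul_comm] using h2

lemma det_le_one {A : Matrix k k ℝ} (hA : A.PosSemidef)
    (hA1 : (1 - A).PosSemidef) : A.det ≤ 1 := by
  have hbound : ∀ i, hA.1.eigenvalues i ≤ 1 := by
    intro i
    set x : k → ℝ := ⇑(hA.1.eigenvectorBasis i) with hxdef
    have hx : A *ᵥ x = hA.1.eigenvalues i • x := hA.1.mulVec_eigenvectorBasis i
    have hxne : x ≠ 0 := by
      have h0 := hA.1.eigenvectorBasis.orthonormal.ne_zero i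
      intro hcon
      apply h0
      ext j
      exact congrFun hcon j
    have h0 : 0 ≤ x ⬝ᵥ x := Finset.sum_nonneg fun j _ => mul_self_nonneg _
    have hne : x ⬝ᵥ x ≠ 0 := fun hcon => hxne (dotProduct_self_eq_zero.1 hcon)
    have hpos : 0 < x ⬝ᵥ x := lt_of_le_of_ne h0 (Ne.symm hne)
    have h2 := hA1.dotProduct_mulVec_nonneg x
    rw [star_trivial, sub_mulVec, one_mulVec, dotProduct_sub, hx, dotProduct_smul] at h2
    simp only [smul_eq_mul] at h2
    nlinarith [h2, hpos]
  have hprod := Finset.prod_le_one (s := (Finset.univ : Finset k))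
    (f := fun i => hA.1.eigenvalues i) (fun i _ => hA.eigenvalues_nonneg i)
    (fun i _ => hbound i)
  rw [hA.1.det_eq_prod_eigenvalues]
  exact_mod_cast hprod

lemma psd_posDef_of_det_ne_zero {B : Matrix k k ℝ} (hB : B.PosSemidef) (hd : B.det ≠ 0) :
    B.PosDef := by
  refine posDef_iff_dotProduct_mulVec.2 ⟨hB.1, fun x hx => lt_of_le_of_ne (hB.dotProduct_mulVec_nonneg x) fun heq => ?_⟩
  have h0 : B *ᵥ x = 0 := (hB.dotProduct_mulVec_zero_iff x).1 heq.symm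
  exact hd ((Matrix.exists_mulVec_eq_zero_iff).1 ⟨x, hx, h0⟩)

open scoped MatrixOrder in
lemma det_le_det {A B : Matrix k k ℝ} (hA : A.PosSemidef) (hBA : (B - A).PosSemidef) :
    A.det ≤ B.det := by
  have hB : B.PosSemidef := by simpa using hBA.add hA
  by_cases hdB : B.det = 0
  · obtain ⟨x, hx0, hx⟩ := (Matrix.exists_mulVec_eq_zero_iff).2 hdB
    have h2 := hBA.dotProduct_mulVec_nonneg x
    rw [star_trivial, sub_mulVec, dotProduct_sub, hx, dotProduct_zero] at h2
    have h3 := hA.dotProduct_mulVec_nonneg x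
    rw [star_trivial] at h3
    have h1 : x ⬝ᵥ A *ᵥ x = 0 := le_antisymm (by linarith) h3
    have h5 : A *ᵥ x = 0 := (hA.dotProduct_mulVec_zero_iff x).1 (by rw [star_trivial]; exact h1)
    have h6 : A.det = 0 := (Matrix.exists_mulVec_eq_zero_iff).1 ⟨x, hx0, h5⟩
    rw [h6, hdB]
  · have hBpd := psd_posDef_of_det_ne_zero hB hdB
    have hS : (CFC.sqrt B).PosSemidef := (CFC.sqrt_nonneg B).posSemidef
    set S := CFC.sqrt B with hSdef
    have hSS : S * S = B := CFC.sqrt_mul_sqrt_self B hB.nonneg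
    have hdS : S.det * S.det = B.det := by rw [← det_mul, hSS]
    have hdB' : 0 < B.det := hBpd.det_pos
    have hdS0 : S.det ≠ 0 := by
      intro h
      rw [h, zero_mul] at hdS
      exact hdB hdS.symm
    have hSunit : IsUnit S.det := isUnit_iff_ne_zero.2 hdS0
    have hStr : Sᵀ = S := herm_transpose hS.1
    have hSinv_tr : (S⁻¹)ᵀ = S⁻¹ := by rw [Matrix.transpose_nonsing_inv, hStr]
    have hconj : (S⁻¹)ᴴ = S⁻¹ := by rw [conjTranspose_eq_transpose_of_trivial, hSinv_tr]
    have hA' : (S⁻¹ * A * S⁻¹).PosSemidef := by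
      have := hA.mul_mul_conjTranspose_same S⁻¹
      rwa [hconj] at this
    have hinvS : S⁻¹ * S = 1 := Matrix.nonsing_inv_mul S hSunit
    have hSinv : S * S⁻¹ = 1 := Matrix.mul_nonsing_inv S hSunit
    have hSmul : S⁻¹ * B * S⁻¹ = 1 := by
      calc S⁻¹ * B * S⁻¹ = S⁻¹ * S * (S * S⁻¹) := by
            rw [← hSS, Matrix.mul_assoc, Matrix.mul_assoc, Matrix.mul_assoc]
        _ = 1 := by rw [hinvS, hSinv, Matrix.one_mul]
    have h1m : (1 - S⁻¹ * A * S⁻¹).PosSemidef := by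
      have heq : 1 - S⁻¹ * A * S⁻¹ = S⁻¹ * (B - A) * (S⁻¹)ᴴ := by
        rw [hconj, Matrix.mul_sub, Matrix.sub_mul, hSmul]
      rw [heq]
      exact hBA.mul_mul_conjTranspose_same S⁻¹
    have hle1 := det_le_one hA' h1m
    have hAeq : A = S * (S⁻¹ * A * S⁻¹) * S := by
      calc A = (S * S⁻¹) * A * (S⁻¹ * S) := by rw [hSinv, hinvS, Matrix.one_mul, Matrix.mul_one]
        _ = S * (S⁻¹ * A * S⁻¹) * S := by simp only [Matrix.mul_assoc]
    have hAdet : A.det = B.det * (S⁻¹ * A * S⁻¹).det := by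
      conv_lhs => rw [hAeq]
      rw [det_mul, det_mul, ← hdS]
      ring
    rw [hAdet]
    nlinarith [hle1, hdB']

lemma fischer {A : Matrix a a ℝ} {B : Matrix a b ℝ} {D : Matrix b b ℝ}
    (h : (fromBlocks A B Bᴴ D).PosSemidef) :
    (fromBlocks A B Bᴴ D).det ≤ A.det * D.det := by
  have hA : A.PosSemidef := by
    have h2 := h.submatrix (Sum.inl : a → a ⊕ b)
    have h3 : (fromBlocks A B Bᴴ D).submatrix (Sum.inl : a → a ⊕ b) Sum.inl = A := rfl
    rwa [h3] at h2
  have hD : D.PosSemidef := by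
    have h2 := h.submatrix (Sum.inr : b → a ⊕ b)
    have h3 : (fromBlocks A B Bᴴ D).submatrix (Sum.inr : b → a ⊕ b) Sum.inr = D := rfl
    rwa [h3] at h2
  by_cases hdA : A.det = 0
  · obtain ⟨x, hx0, hx⟩ := (Matrix.exists_mulVec_eq_zero_iff).2 hdA
    set y : a ⊕ b → ℝ := Sum.elim x 0 with hy
    have hyne : y ≠ 0 := by
      intro hcon
      apply hx0
      funext i
      exact congrFun hcon (Sum.inl i)
    have h1 : y ⬝ᵥ (fromBlocks A B Bᴴ D) *ᵥ y = 0 := by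
      rw [hy, fromBlocks_mulVec]
      simp [dotProduct, Fintype.sum_sum_type, hx]
    have h2 : (fromBlocks A B Bᴴ D) *ᵥ y = 0 :=
      (h.dotProduct_mulVec_zero_iff y).1 (by rw [star_trivial]; exact h1)
    have h3 : (fromBlocks A B Bᴴ D).det = 0 :=
      (Matrix.exists_mulVec_eq_zero_iff).1 ⟨y, hyne, h2⟩
    rw [h3, hdA, zero_mul]
  · have hApd := psd_posDef_of_det_ne_zero hA hdA
    haveI := hApd.isUnit.invertible
    rw [Matrix.det_fromBlocks₁₁, invOf_eq_nonsing_inv]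
    have hSchur : (D - Bᴴ * A⁻¹ * B).PosSemidef := (Matrix.PosDef.fromBlocks₁₁ B D hApd).1 h
    have h2 : (D - (D - Bᴴ * A⁻¹ * B)).PosSemidef := by
      rw [sub_sub_cancel]
      have hAinv : (A⁻¹).PosSemidef := hA.inv
      have h3 := hAinv.mul_mul_conjTranspose_same Bᴴ
      rwa [conjTranspose_conjTranspose] at h3
    have h4 := det_le_det hSchur h2
    nlinarith [h4, hApd.det_pos, psd_det_nonneg hSchur]

/-! ### Alternating map / matrix dictionary -/

variable {p m : ℕ}

def mat (v : Fin p → Fin m → ℝ) : Matrix (Fin p) (Fin m) ℝ := Matrix.of fun i k => v i k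

def gramM (v : Fin p → Fin m → ℝ) : Matrix (Fin p) (Fin p) ℝ := mat v * (mat v)ᵀ

lemma gramM_apply (v : Fin p → Fin m → ℝ) (i j : Fin p) :
    gramM v i j = ∑ t, v i t * v j t := by
  simp [gramM, mat, Matrix.mul_apply]

lemma gramM_psd (v : Fin p → Fin m → ℝ) : (gramM v).PosSemidef := by
  have h := Matrix.posSemidef_self_mul_conjTranspose (mat v)
  rwa [conjTranspose_eq_transpose_of_trivial] at h

lemma gram_eq (v : Fin p → Fin m → ℝ) :
    (Matrix.of fun i j => stdG m (v i) (v j)) = gramM v := by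
  ext i j
  simp [stdG, gramM, mat, Matrix.mul_apply]

lemma map_rows_mul (f : (Fin m → ℝ) [⋀^Fin p]→ₗ[ℝ] ℝ) (A : Matrix (Fin p) (Fin p) ℝ)
    (v : Fin p → Fin m → ℝ) :
    f (fun i => (A * mat v) i) = A.det * f v := by
  classical
  set L : (Fin p → ℝ) →ₗ[ℝ] (Fin m → ℝ) := (mat v)ᵀ.mulVecLin with hL
  have hLe : ∀ x : Fin p → ℝ, L x = fun t => ∑ j, x j * v j t := by
    intro x
    funext t
    simp only [hL, Matrix.mulVecLin_apply, Matrix.mulVec, dotProduct,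
      Matrix.transpose_apply, mat, Matrix.of_apply]
    exact Finset.sum_congr rfl fun j _ => mul_comm _ _
  have key := (f.compLinearMap L).eq_smul_basis_det (Pi.basisFun ℝ (Fin p))
  have h1 : (f.compLinearMap L) (fun i => A i) = f (fun i => (A * mat v) i) := by
    rw [AlternatingMap.compLinearMap_apply]
    refine congrArg (⇑f) ?_
    funext i
    rw [hLe]
    funext t
    simp [Matrix.mul_apply, mat]
  have h2 : (f.compLinearMap L) (⇑(Pi.basisFun ℝ (Fin p))) = f v := by
    rw [AlternatingMap.compLinearMap_apply]
    refine congrArg (⇑f) ?_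
    funext i
    rw [hLe]
    funext t
    simp [Pi.basisFun_apply, Pi.single_apply]
  have h3 := congrFun (congrArg (fun (g : (Fin p → ℝ) [⋀^Fin p]→ₗ[ℝ] ℝ) => g.toFun) key)
    (fun i => A i)
  simp only [AlternatingMap.toFun_eq_coe, AlternatingMap.smul_apply] at h3
  have h4 : (Pi.basisFun ℝ (Fin p)).det (fun i => A i) = A.det := by
    rw [Pi.basisFun_det]
    rfl
  calc f (fun i => (A * mat v) i) = (f.compLinearMap L) (fun i => A i) := h1.symm
    _ = (f.compLinearMap L) (⇑(Pi.basisFun ℝ (Fin p))) •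
          (Pi.basisFun ℝ (Fin p)).det (fun i => A i) := h3
    _ = A.det * f v := by rw [h2, h4, smul_eq_mul, mul_comm]

lemma axisForm_apply {n' : ℕ} (I : Fin p → Fin n') (v : Fin p → Fin n' → ℝ) :
    axisForm I v = ((mat v).submatrix id I).det := by
  simp only [axisForm, AlternatingMap.compLinearMap_apply, Pi.basisFun_det]
  rfl

lemma map_eq_zero_of_det_eq_zero (f : (Fin m → ℝ) [⋀^Fin p]→ₗ[ℝ] ℝ)
    (v : Fin p → Fin m → ℝ) (h : (gramM v).det = 0) : f v = 0 := by
  classical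
  by_cases hli : LinearIndependent ℝ v
  · exfalso
    obtain ⟨x, hx0, hx⟩ := (Matrix.exists_mulVec_eq_zero_iff).2 h
    have h1 : x ⬝ᵥ (gramM v) *ᵥ x = 0 := by rw [hx, dotProduct_zero]
    have h2 : (x ᵥ* mat v) ⬝ᵥ (x ᵥ* mat v) = 0 := by
      rw [← h1]
      calc (x ᵥ* mat v) ⬝ᵥ (x ᵥ* mat v)
          = (x ᵥ* mat v) ⬝ᵥ ((mat v)ᵀ *ᵥ x) := by rw [Matrix.mulVec_transpose]
        _ = ((x ᵥ* mat v) ᵥ* (mat v)ᵀ) ⬝ᵥ x := by rw [dotProduct_mulVec]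
        _ = (x ᵥ* (mat v * (mat v)ᵀ)) ⬝ᵥ x := by rw [Matrix.vecMul_vecMul]
        _ = x ⬝ᵥ (gramM v) *ᵥ x := by rw [← dotProduct_mulVec]; rfl
    have h3 : x ᵥ* mat v = 0 := dotProduct_self_eq_zero.1 h2
    have h4 : ∑ i, x i • v i = 0 := by
      funext t
      have h5 := congrFun h3 t
      simpa [Matrix.vecMul, dotProduct, mat, Finset.sum_apply] using h5
    rw [Fintype.linearIndependent_iff] at hli
    exact hx0 (funext fun i => hli x h4 i)
  · exact f.map_linearDependent v hli

lemma abs_map_le_sum (f : (Fin m → ℝ) [⋀^Fin p]→ₗ[ℝ] ℝ) (w : Fin p → Fin m → ℝ)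
    (hw : ∀ i j, |w i j| ≤ 1) :
    |f w| ≤ ∑ c : Fin p → Fin m, |f (fun i => Pi.single (c i) 1)| := by
  classical
  have hrep : w = fun i => ∑ j, w i j • (Pi.single j 1 : Fin m → ℝ) := by
    funext i t
    simp [Pi.single_apply, Finset.sum_apply]
  have hsum : f w = ∑ c : Fin p → Fin m,
      f (fun i => w i (c i) • (Pi.single (c i) 1 : Fin m → ℝ)) := by
    conv_lhs => rw [hrep]
    exact f.toMultilinearMap.map_sum
      (g := fun i j => w i j • (Pi.single j 1 : Fin m → ℝ))
  rw [hsum]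
  refine (Finset.abs_sum_le_sum_abs _ _).trans ?_
  refine Finset.sum_le_sum fun c _ => ?_
  have h1 : f (fun i => w i (c i) • (Pi.single (c i) 1 : Fin m → ℝ)) =
      (∏ i, w i (c i)) • f (fun i => Pi.single (c i) 1) :=
    f.toMultilinearMap.map_smul_univ (fun i => w i (c i))
      (fun i => (Pi.single (c i) 1 : Fin m → ℝ))
  rw [h1, smul_eq_mul, abs_mul]
  have h2 : |∏ i, w i (c i)| ≤ 1 := by
    rw [Finset.abs_prod]
    exact Finset.prod_le_one (fun i _ => abs_nonneg _) (fun i _ => hw i (c i))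
  nlinarith [abs_nonneg (f (fun i => Pi.single (c i) (1:ℝ))), h2]

lemma gram_single (c : Fin p → Fin m) (hc : Function.Injective c) :
    gramM (fun i => Pi.single (c i) (1:ℝ)) = 1 := by
  ext i j
  rw [gramM_apply]
  simp only [Pi.single_apply]
  rw [Finset.sum_eq_single (c i)]
  · by_cases h : i = j
    · subst h; simp
    · have hne : c i ≠ c j := fun hcon => h (hc hcon)
      rw [if_pos rfl, if_neg hne, Matrix.one_apply_ne h, one_mul]
  · intro t _ ht
    rw [if_neg ht, zero_mul]
  · intro ht
    exact absurd (Finset.mem_univ _) ht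

lemma scale_mem (hp : 0 < p) (f : (Fin m → ℝ) [⋀^Fin p]→ₗ[ℝ] ℝ)
    (v : Fin p → Fin m → ℝ) (c : ℝ) (hc : c ^ 2 * (gramM v).det = 1) :
    ∃ v', (gramM v').det = 1 ∧ f v' = c * f v := by
  classical
  set A : Matrix (Fin p) (Fin p) ℝ :=
    Matrix.diagonal (Function.update (fun _ => (1:ℝ)) ⟨0, hp⟩ c) with hA
  have hdetA : A.det = c := by
    rw [hA, Matrix.det_diagonal]
    rw [Finset.prod_eq_single ⟨0, hp⟩]
    · simp
    · intro t _ ht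
      simp [Function.update_of_ne ht]
    · intro ht
      exact absurd (Finset.mem_univ _) ht
  refine ⟨fun i => (A * mat v) i, ?_, by rw [map_rows_mul, hdetA]⟩
  have hgram : gramM (fun i => (A * mat v) i) = A * gramM v * Aᵀ := by
    show (A * mat v) * (A * mat v)ᵀ = A * (mat v * (mat v)ᵀ) * Aᵀ
    rw [Matrix.transpose_mul]
    simp only [Matrix.mul_assoc]
  rw [hgram, det_mul, det_mul, det_transpose, hdetA]
  nlinarith [hc]

open scoped MatrixOrder in
lemma polar (v : Fin p → Fin m → ℝ) (h : (gramM v).det = 1) :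
    ∃ w, gramM w = 1 ∧ ∀ f : (Fin m → ℝ) [⋀^Fin p]→ₗ[ℝ] ℝ, f v = f w := by
  classical
  have hG : (gramM v).PosSemidef := gramM_psd v
  have hS : (CFC.sqrt (gramM v)).PosSemidef := (CFC.sqrt_nonneg (gramM v)).posSemidef
  set S := CFC.sqrt (gramM v) with hSdef
  have hSS : S * S = gramM v := CFC.sqrt_mul_sqrt_self (gramM v) hG.nonneg
  have hdS : S.det * S.det = 1 := by rw [← det_mul, hSS, h]
  have hdS0 : 0 ≤ S.det := psd_det_nonneg hS
  have hdS1 : S.det = 1 := by nlinarith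
  have hSunit : IsUnit S.det := by rw [hdS1]; exact isUnit_one
  have hinvS : S⁻¹ * S = 1 := Matrix.nonsing_inv_mul S hSunit
  have hSinv : S * S⁻¹ = 1 := Matrix.mul_nonsing_inv S hSunit
  have hStr : Sᵀ = S := herm_transpose hS.1
  have hSinv_tr : (S⁻¹)ᵀ = S⁻¹ := by rw [Matrix.transpose_nonsing_inv, hStr]
  refine ⟨fun i => (S⁻¹ * mat v) i, ?_, fun f => ?_⟩
  · show (S⁻¹ * mat v) * (S⁻¹ * mat v)ᵀ = 1
    rw [Matrix.transpose_mul, hSinv_tr]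
    calc S⁻¹ * mat v * ((mat v)ᵀ * S⁻¹)
        = S⁻¹ * (mat v * (mat v)ᵀ) * S⁻¹ := by simp only [Matrix.mul_assoc]
      _ = S⁻¹ * (S * S) * S⁻¹ := by rw [hSS]; rfl
      _ = (S⁻¹ * S) * (S * S⁻¹) := by simp only [Matrix.mul_assoc]
      _ = 1 := by rw [hinvS, hSinv, Matrix.one_mul]
  · have hv : v = fun i => (S * mat (fun i => (S⁻¹ * mat v) i)) i := by
      show v = fun i => (S * (S⁻¹ * mat v)) i
      rw [← Matrix.mul_assoc, hSinv, Matrix.one_mul]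
      rfl
    conv_lhs => rw [hv]
    rw [map_rows_mul, hdS1, one_mul]

lemma abs_le_sSup (hp : 0 < p) (f : (Fin m → ℝ) [⋀^Fin p]→ₗ[ℝ] ℝ)
    (hbdd : BddAbove {c | ∃ v, (gramM v).det = 1 ∧ f v = c}) (v : Fin p → Fin m → ℝ) :
    |f v| ≤ sSup {c | ∃ v, (gramM v).det = 1 ∧ f v = c} * Real.sqrt (gramM v).det := by
  set d := (gramM v).det with hd
  have hd0 : 0 ≤ d := psd_det_nonneg (gramM_psd v)
  rcases eq_or_lt_of_le hd0 with h0 | hpos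
  · rw [map_eq_zero_of_det_eq_zero f v h0.symm]
    simp [← h0]
  · set c := (Real.sqrt d)⁻¹ with hc
    have hsq : 0 < Real.sqrt d := Real.sqrt_pos.2 hpos
    have hc0 : 0 < c := by positivity
    have hc2 : c ^ 2 * d = 1 := by
      rw [hc, sq, ← mul_inv, Real.mul_self_sqrt hd0]
      exact inv_mul_cancel₀ hpos.ne'
    obtain ⟨v1, hv1, hfv1⟩ := scale_mem hp f v c hc2
    obtain ⟨v2, hv2, hfv2⟩ := scale_mem hp f v (-c) (by rw [neg_pow]; simpa using hc2)
    have h1 : c * f v ≤ sSup {c | ∃ v, (gramM v).det = 1 ∧ f v = c} :=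
      le_csSup hbdd ⟨v1, hv1, hfv1⟩
    have h2 : -(c * f v) ≤ sSup {c | ∃ v, (gramM v).det = 1 ∧ f v = c} := by
      have := le_csSup hbdd ⟨v2, hv2, hfv2⟩
      linarith [this]
    have habs : c * |f v| ≤ sSup {c | ∃ v, (gramM v).det = 1 ∧ f v = c} := by
      rcases abs_cases (f v) with ⟨he, _⟩ | ⟨he, _⟩
      · rw [he]; exact h1
      · rw [he]; linarith
    calc |f v| = (c * |f v|) * Real.sqrt d := by
          rw [hc]; field_simp
      _ ≤ sSup {c | ∃ v, (gramM v).det = 1 ∧ f v = c} * Real.sqrt d :=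
          mul_le_mul_of_nonneg_right habs hsq.le

lemma sqrt_ineq {N : Matrix (Fin 2) (Fin 2) ℝ} (h1 : N.PosSemidef)
    (h2 : (1 - N).PosSemidef) {M : ℝ} (hM : 0 ≤ M) :
    Real.sqrt N.det + M * Real.sqrt (1 - N).det ≤ max 1 M := by
  have ha := psd_diag h1 0
  have hcc := psd_diag h1 1
  have ha1 := psd_diag h2 0
  have hc1 := psd_diag h2 1
  simp only [Matrix.sub_apply, Matrix.one_apply_eq] at ha1 hc1
  have hb : N 1 0 = N 0 1 := by
    have h3 := herm_transpose h1.1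
    have h4 := congrFun (congrFun h3 1) 0
    simpa [Matrix.transpose_apply] using h4.symm
  have hdN : N.det = N 0 0 * N 1 1 - N 0 1 * N 0 1 := by
    rw [Matrix.det_fin_two, hb]
  have hdN1 : (1 - N).det = (1 - N 0 0) * (1 - N 1 1) - N 0 1 * N 0 1 := by
    rw [Matrix.det_fin_two]
    simp only [Matrix.sub_apply, Matrix.one_apply_eq, Matrix.one_apply_ne (by decide : (0 : Fin 2) ≠ 1),
      Matrix.one_apply_ne (by decide : (1 : Fin 2) ≠ 0), hb]
    ring
  set x := Real.sqrt N.det with hx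
  set y := Real.sqrt (1 - N).det with hy
  have hx0 : 0 ≤ x := Real.sqrt_nonneg _
  have hy0 : 0 ≤ y := Real.sqrt_nonneg _
  have hx2 : x ^ 2 = N.det := Real.sq_sqrt (psd_det_nonneg h1)
  have hy2 : y ^ 2 = (1 - N).det := Real.sq_sqrt (psd_det_nonneg h2)
  set aa := N 0 0
  set cc := N 1 1
  set bb := N 0 1
  have hdet1 : 0 ≤ aa * cc - bb * bb := by
    have := psd_det_nonneg h1; rw [hdN] at this; linarith
  have hdet2 : 0 ≤ (1 - aa) * (1 - cc) - bb * bb := by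
    have := psd_det_nonneg h2; rw [hdN1] at this; linarith
  have key : x + y ≤ 1 := by
    have h3 : (x * y) ^ 2 ≤ (aa * cc) * ((1 - aa) * (1 - cc)) := by
      have : (x * y) ^ 2 = (aa * cc - bb * bb) * ((1 - aa) * (1 - cc) - bb * bb) := by
        rw [mul_pow, hx2, hy2, hdN, hdN1]
      rw [this]
      nlinarith [sq_nonneg bb, hdet1, hdet2]
    have hs0 : 0 ≤ (aa * (1 - cc) + cc * (1 - aa)) / 2 := by nlinarith
    have h5 : x * y ≤ (aa * (1 - cc) + cc * (1 - aa)) / 2 := by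
      nlinarith [h3, sq_nonneg (aa * (1 - cc) - cc * (1 - aa)), mul_nonneg hx0 hy0, hs0]
    nlinarith [hx2, hy2, hdN, hdN1, h5, sq_nonneg bb, add_nonneg hx0 hy0]
  have hm1 : (1:ℝ) ≤ max 1 M := le_max_left _ _
  have hmM : M ≤ max 1 M := le_max_right _ _
  calc x + M * y ≤ max 1 M * x + max 1 M * y := by nlinarith
    _ = max 1 M * (x + y) := by ring
    _ ≤ max 1 M * 1 := by nlinarith
    _ = max 1 M := mul_one _


section Main

variable {n q : ℕ}

def rho (n : ℕ) : Fin 2 → Fin (n + 2) := fun t => ⟨n + t, by omega⟩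

lemma rho_injective (n : ℕ) : Function.Injective (rho n) := by
  intro s t h
  have h2 := congrArg Fin.val h
  simp only [rho] at h2
  exact Fin.val_injective (by omega)

lemma phiIdx_comp (J : Fin q → Fin n) :
    phiIdx n q J ∘ finSumFinEquiv =
      Sum.elim (fun i => Fin.castLE (Nat.le_add_right n 2) (J i)) (rho n) := by
  funext x
  rcases x with i | t
  · simp only [Function.comp_apply, finSumFinEquiv_apply_left, Sum.elim_inl]
    have hcast : (Fin.castAdd 2 i : Fin (q + 2)) = Fin.castSucc (Fin.castSucc i) := by
      ext; simp
    rw [hcast]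
    simp only [phiIdx, Fin.snoc_castSucc]
  · simp only [Function.comp_apply, finSumFinEquiv_apply_right, Sum.elim_inr]
    have ht2 : (t : ℕ) = 0 ∨ (t : ℕ) = 1 := by omega
    rcases ht2 with h | h
    · have h0 : (Fin.natAdd q t : Fin (q + 2)) = Fin.castSucc (Fin.last q) := by
        ext; simp [h]
      rw [h0]
      simp only [phiIdx, Fin.snoc_castSucc, Fin.snoc_last]
      ext; simp [rho, h]
    · have h1 : (Fin.natAdd q t : Fin (q + 2)) = Fin.last (q + 1) := by
        ext; simp [h]
      rw [h1]
      simp only [phiIdx, Fin.snoc_last]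
      ext; simp [rho, h]

lemma phiIdx_last (J : Fin q → Fin n) :
    phiIdx n q J (Fin.last (q + 1)) = ⟨n + 1, by omega⟩ := by
  simp only [phiIdx, Fin.snoc_last]

lemma phiIdx_injective (J : Fin q → Fin n) (hJ : StrictMono J) :
    Function.Injective (phiIdx n q J) := by
  have h1 : Function.Injective (phiIdx n q J ∘ finSumFinEquiv) := by
    rw [phiIdx_comp]
    intro x y h
    rcases x with i | s <;> rcases y with j | t
    · have h2 : J i = J j := Fin.castLE_injective (Nat.le_add_right n 2) (by exact h)
      exact congrArg Sum.inl (hJ.injective h2)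
    · exfalso
      have h2 := congrArg Fin.val h
      simp only [Sum.elim_inl, Sum.elim_inr, Fin.coe_castLE, rho] at h2
      have hlt := (J i).isLt
      omega
    · exfalso
      have h2 := congrArg Fin.val h
      simp only [Sum.elim_inl, Sum.elim_inr, Fin.coe_castLE, rho] at h2
      have hlt := (J j).isLt
      omega
    · exact congrArg Sum.inr (rho_injective n (by exact h))
  intro x y hxy
  have h2 : (phiIdx n q J ∘ finSumFinEquiv) (finSumFinEquiv.symm x) =
      (phiIdx n q J ∘ finSumFinEquiv) (finSumFinEquiv.symm y) := by
    simp only [Function.comp_apply, Equiv.apply_symm_apply]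
    exact hxy
  exact finSumFinEquiv.symm.injective (h1 h2)

def truncF (n : ℕ) {p : ℕ} (v : Fin p → Fin (n + 2) → ℝ) : Fin p → Fin (n + 2) → ℝ :=
  fun i k => if (k : ℕ) < n then v i k else 0

lemma truncF_gram {p : ℕ} (v : Fin p → Fin (n + 2) → ℝ) :
    gramM (truncF n v) =
      gramM v - (mat v).submatrix id (rho n) * ((mat v).submatrix id (rho n))ᵀ := by
  ext i j
  simp only [Matrix.sub_apply, Matrix.mul_apply, Matrix.transpose_apply,
    Matrix.submatrix_apply, id_eq, mat, Matrix.of_apply]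
  rw [gramM_apply, gramM_apply]
  rw [Fin.sum_univ_add (f := fun k : Fin (n + 2) => truncF n v i k * truncF n v j k),
    Fin.sum_univ_add (f := fun k : Fin (n + 2) => v i k * v j k)]
  have h1 : ∀ k : Fin n,
      truncF n v i (Fin.castAdd 2 k) * truncF n v j (Fin.castAdd 2 k) =
        v i (Fin.castAdd 2 k) * v j (Fin.castAdd 2 k) := by
    intro k
    have hk : ((Fin.castAdd 2 k : Fin (n + 2)) : ℕ) < n := by
      simp only [Fin.coe_castAdd]
      exact k.isLt
    simp [truncF, hk]
  have h2 : ∀ t : Fin 2, truncF n v i (Fin.natAdd n t) = 0 := by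
    intro t
    have ht : ¬ ((Fin.natAdd n t : Fin (n + 2)) : ℕ) < n := by
      simp only [Fin.coe_natAdd]
      omega
    simp [truncF, ht]
  have h3 : ∀ t : Fin 2, (Fin.natAdd n t : Fin (n + 2)) = rho n t := by
    intro t; ext; simp [rho]
  rw [Finset.sum_congr rfl (fun k _ => h1 k),
    Finset.sum_congr rfl (fun (t : Fin 2) _ => by rw [h2 t, zero_mul] :
      ∀ t ∈ Finset.univ, truncF n v i (Fin.natAdd n t) * truncF n v j (Fin.natAdd n t) = 0)]
  rw [Finset.sum_const_zero, add_zero]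
  have h4 : ∑ t : Fin 2, v i (Fin.natAdd n t) * v j (Fin.natAdd n t) =
      ∑ t : Fin 2, v i (rho n t) * v j (rho n t) :=
    Finset.sum_congr rfl fun t _ => by rw [h3]
  rw [h4]
  ring

lemma truncF_funLeft {p : ℕ} (v : Fin p → Fin (n + 2) → ℝ) (i : Fin p) :
    (LinearMap.funLeft ℝ ℝ (Fin.castLE (Nat.le_add_right n 2))) (truncF n v i) =
      (LinearMap.funLeft ℝ ℝ (Fin.castLE (Nat.le_add_right n 2))) (v i) := by
  funext j
  simp only [LinearMap.funLeft_apply, Function.comp_apply]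
  have hj : ((Fin.castLE (Nat.le_add_right n 2) j : Fin (n + 2)) : ℕ) < n := j.isLt
  simp [truncF, hj]

lemma core (n q : ℕ) (J : Fin q → Fin n) (hJ : StrictMono J)
    (ψ₀ : (Fin n → ℝ) [⋀^Fin (q + 2)]→ₗ[ℝ] ℝ) (M : ℝ) (hM0 : 0 ≤ M)
    (hMbd : ∀ v : Fin (q + 2) → Fin (n + 2) → ℝ,
      |(ψ₀.compLinearMap (LinearMap.funLeft ℝ ℝ (Fin.castLE (Nat.le_add_right n 2)))) v|
        ≤ M * Real.sqrt (gramM v).det)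
    (w : Fin (q + 2) → Fin (n + 2) → ℝ) (hw : gramM w = 1) :
    (axisForm (phiIdx n q J) +
      ψ₀.compLinearMap (LinearMap.funLeft ℝ ℝ (Fin.castLE (Nat.le_add_right n 2)))) w
      ≤ max 1 M := by
  classical
  set Ψ := ψ₀.compLinearMap (LinearMap.funLeft ℝ ℝ (Fin.castLE (Nat.le_add_right n 2)))
    with hΨdef
  set B := mat w with hB
  have hBB : B * Bᵀ = 1 := hw
  set P := Bᵀ * B with hPdef
  have hPP : P * P = P := by
    rw [hPdef]
    calc Bᵀ * B * (Bᵀ * B) = Bᵀ * (B * Bᵀ) * B := by simp only [Matrix.mul_assoc]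
      _ = Bᵀ * B := by rw [hBB, Matrix.mul_one]
  have hPsym : Pᵀ = P := by rw [hPdef, Matrix.transpose_mul, Matrix.transpose_transpose]
  have hPpsd : P.PosSemidef := by
    have h := Matrix.posSemidef_conjTranspose_mul_self B
    rwa [conjTranspose_eq_transpose_of_trivial] at h
  have hP1sub : (1 - P) * (1 - P) = 1 - P := by
    rw [Matrix.mul_sub, Matrix.mul_one, Matrix.sub_mul, Matrix.one_mul, hPP]
    abel
  have hP1psd : (1 - P).PosSemidef := by
    have htr : (1 - P)ᴴ = 1 - P := by
      rw [conjTranspose_eq_transpose_of_trivial, Matrix.transpose_sub,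
        Matrix.transpose_one, hPsym]
    have h := Matrix.posSemidef_conjTranspose_mul_self (1 - P)
    rwa [htr, hP1sub] at h
  set N := P.submatrix (rho n) (rho n) with hNdef
  have hNpsd : N.PosSemidef := hPpsd.submatrix _
  have hN1 : (1 : Matrix (Fin 2) (Fin 2) ℝ) - N = (1 - P).submatrix (rho n) (rho n) := by
    ext s t
    simp only [Matrix.sub_apply, Matrix.submatrix_apply, hNdef]
    congr 1
    rw [Matrix.one_apply, Matrix.one_apply]
    by_cases h : s = t
    · simp [h]
    · have hne : rho n s ≠ rho n t := fun hcon => h (rho_injective n hcon)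
      simp [h, hne]
  have hN1psd : ((1 : Matrix (Fin 2) (Fin 2) ℝ) - N).PosSemidef := by
    rw [hN1]; exact hP1psd.submatrix _
  set ΦJ : Fin q → Fin (n + 2) := fun i => Fin.castLE (Nat.le_add_right n 2) (J i) with hΦJ
  have hΦJinj : Function.Injective ΦJ := fun i j h =>
    hJ.injective (Fin.castLE_injective (Nat.le_add_right n 2) h)
  set A1 := P.submatrix ΦJ ΦJ with hA1def
  have hA1psd : A1.PosSemidef := hPpsd.submatrix _
  have hA11 : (1 : Matrix (Fin q) (Fin q) ℝ) - A1 = (1 - P).submatrix ΦJ ΦJ := by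
    ext s t
    simp only [Matrix.sub_apply, Matrix.submatrix_apply, hA1def]
    congr 1
    rw [Matrix.one_apply, Matrix.one_apply]
    by_cases h : s = t
    · simp [h]
    · have hne : ΦJ s ≠ ΦJ t := fun hcon => h (hΦJinj hcon)
      simp [h, hne]
  have hA1le : A1.det ≤ 1 := det_le_one hA1psd (by rw [hA11]; exact hP1psd.submatrix _)
  set B1 := P.submatrix ΦJ (rho n) with hB1def
  have hB1conj : B1ᴴ = P.submatrix (rho n) ΦJ := by
    ext s t
    simp only [conjTranspose_apply, Matrix.submatrix_apply, star_trivial, hB1def]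
    have h2 := congrFun (congrFun hPsym (ΦJ t)) (rho n s)
    simpa [Matrix.transpose_apply] using h2.symm
  have hblocks : fromBlocks A1 B1 B1ᴴ N = P.submatrix (Sum.elim ΦJ (rho n)) (Sum.elim ΦJ (rho n)) := by
    rw [hB1conj]
    ext x y
    rcases x with i | s <;> rcases y with j | t <;> rfl
  have hblockpsd : (fromBlocks A1 B1 B1ᴴ N).PosSemidef := by
    rw [hblocks]; exact hPpsd.submatrix _
  have hfis := fischer hblockpsd
  have hdetblocks : (fromBlocks A1 B1 B1ᴴ N).det =
      (P.submatrix (phiIdx n q J) (phiIdx n q J)).det := by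
    rw [hblocks]
    have heq : P.submatrix (Sum.elim ΦJ (rho n)) (Sum.elim ΦJ (rho n)) =
        (P.submatrix (phiIdx n q J) (phiIdx n q J)).submatrix finSumFinEquiv finSumFinEquiv := by
      ext x y
      simp only [Matrix.submatrix_apply]
      rw [← congrFun (phiIdx_comp J) x, ← congrFun (phiIdx_comp J) y]
      rfl
    rw [heq, Matrix.det_submatrix_equiv_self]
  set C := B.submatrix id (phiIdx n q J) with hCdef
  have hφval : axisForm (phiIdx n q J) w = C.det := axisForm_apply _ _
  have hCtC : Cᵀ * C = P.submatrix (phiIdx n q J) (phiIdx n q J) := by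
    ext s t
    simp only [Matrix.mul_apply, Matrix.transpose_apply, Matrix.submatrix_apply,
      id_eq, hCdef, hPdef]
  have hφsq : (axisForm (phiIdx n q J) w) ^ 2 ≤ N.det := by
    have h1 : C.det ^ 2 = (Cᵀ * C).det := by rw [det_mul, det_transpose, sq]
    calc (axisForm (phiIdx n q J) w) ^ 2 = (Cᵀ * C).det := by rw [hφval, h1]
      _ = (fromBlocks A1 B1 B1ᴴ N).det := by rw [hCtC, ← hdetblocks]
      _ ≤ A1.det * N.det := hfis
      _ ≤ 1 * N.det := by nlinarith [psd_det_nonneg hNpsd, hA1le]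
      _ = N.det := one_mul _
  have hφle : axisForm (phiIdx n q J) w ≤ Real.sqrt N.det := by
    have h2 := Real.sqrt_le_sqrt hφsq
    rw [Real.sqrt_sq_eq_abs] at h2
    exact (le_abs_self _).trans h2
  set u := truncF n w with hu
  have hψeq : Ψ w = Ψ u := by
    rw [hΨdef, AlternatingMap.compLinearMap_apply, AlternatingMap.compLinearMap_apply]
    refine congrArg (⇑ψ₀) ?_
    funext i
    exact (truncF_funLeft w i).symm
  have hgu : gramM u = 1 - (B.submatrix id (rho n)) * (B.submatrix id (rho n))ᵀ := by
    rw [hu, truncF_gram, ← hB, hw]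
  have hWN : ((B.submatrix id (rho n))ᵀ * (B.submatrix id (rho n))) = N := by
    ext s t
    simp only [Matrix.mul_apply, Matrix.transpose_apply, Matrix.submatrix_apply,
      id_eq, hNdef, hPdef]
  have hdu : (gramM u).det = ((1 : Matrix (Fin 2) (Fin 2) ℝ) - N).det := by
    rw [hgu, Matrix.det_one_sub_mul_comm, hWN]
  have hψle : Ψ w ≤ M * Real.sqrt ((1 : Matrix (Fin 2) (Fin 2) ℝ) - N).det := by
    calc Ψ w = Ψ u := hψeq
      _ ≤ |Ψ u| := le_abs_self _
      _ ≤ M * Real.sqrt (gramM u).det := hMbd u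
      _ = M * Real.sqrt ((1 : Matrix (Fin 2) (Fin 2) ℝ) - N).det := by rw [hdu]
  have hfinal := sqrt_ineq hNpsd hN1psd hM0
  calc (axisForm (phiIdx n q J) + Ψ) w = axisForm (phiIdx n q J) w + Ψ w :=
        AlternatingMap.add_apply _ _ _
    _ ≤ Real.sqrt N.det + M * Real.sqrt ((1 : Matrix (Fin 2) (Fin 2) ℝ) - N).det :=
        add_le_add hφle hψle
    _ ≤ max 1 M := hfinal

end Main

end Stmt5Aux

open Stmt5Aux in
/-- Let `φ = e*_J ∧ e*_{n+1} ∧ e*_{n+2}` (a `p`-form on `ℝ^{n+2}`, `p = q+2`,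
involving both of the last two coordinates), and let `ψ` be any `p`-form
involving only the first `n` coordinates (i.e. the pullback of a `p`-form `ψ₀`
on `ℝⁿ` under the coordinate projection).  Then `‖φ + ψ‖* = max {1, ‖ψ‖*}`. -/
theorem stmt5 (n q : ℕ) (J : Fin q → Fin n) (hJ : StrictMono J)
    (ψ₀ : (Fin n → ℝ) [⋀^Fin (q + 2)]→ₗ[ℝ] ℝ) :
    comass (axisForm (phiIdx n q J) +
        ψ₀.compLinearMap (LinearMap.funLeft ℝ ℝ (Fin.castLE (Nat.le_add_right n 2))))
      (stdG (n + 2)) =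
    max 1 (comass
        (ψ₀.compLinearMap (LinearMap.funLeft ℝ ℝ (Fin.castLE (Nat.le_add_right n 2))))
      (stdG (n + 2))) := by
  classical
  have hcomass : ∀ f : (Fin (n + 2) → ℝ) [⋀^Fin (q + 2)]→ₗ[ℝ] ℝ,
      comass f (stdG (n + 2)) = sSup {c | ∃ v, (gramM v).det = 1 ∧ f v = c} := by
    intro f
    have hset : {c | ∃ v : Fin (q + 2) → (Fin (n + 2) → ℝ),
        (Matrix.of fun i j => stdG (n + 2) (v i) (v j)).det = 1 ∧ f v = c} =
        {c | ∃ v, (gramM v).det = 1 ∧ f v = c} := by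
      ext c
      constructor <;> rintro ⟨v, h1, h2⟩ <;> refine ⟨v, ?_, h2⟩
      · rwa [gram_eq] at h1
      · rwa [gram_eq]
    rw [comass, hset]
  rw [hcomass, hcomass]
  set Ψ := ψ₀.compLinearMap (LinearMap.funLeft ℝ ℝ (Fin.castLE (Nat.le_add_right n 2)))
    with hΨdef
  set Φf := axisForm (phiIdx n q J) with hΦdef
  set T := {c | ∃ v, (gramM v).det = 1 ∧ Ψ v = c} with hTdef
  set S := {c | ∃ v, (gramM v).det = 1 ∧ (Φf + Ψ) v = c} with hSdef
  set M := sSup T with hMdef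
  have hp2 : 0 < q + 2 := by omega
  have hqn : q ≤ n := by
    have h := Fintype.card_le_of_injective J hJ.injective
    simpa using h
  set vfix : Fin (q + 2) → Fin (n + 2) → ℝ :=
    fun i => Pi.single (Fin.castLE (by omega : q + 2 ≤ n + 2) i) 1 with hvfix
  have hvfixgram : (gramM vfix).det = 1 := by
    rw [hvfix, gram_single _ (Fin.castLE_injective _), det_one]
  have hT0 : Ψ vfix ∈ T := ⟨vfix, hvfixgram, rfl⟩
  have hTne : T.Nonempty := ⟨_, hT0⟩
  have hTbdd : BddAbove T := by
    refine ⟨∑ c : Fin (q + 2) → Fin (n + 2), |Ψ (fun i => Pi.single (c i) 1)|, ?_⟩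
    rintro x ⟨v, hv, rfl⟩
    obtain ⟨w, hw, hvw⟩ := polar v hv
    rw [hvw Ψ]
    refine (le_abs_self _).trans (abs_map_le_sum Ψ w ?_)
    intro i j
    have h1 : ∑ t, w i t * w i t = 1 := by
      have h2 := congrFun (congrFun hw i) i
      rw [Matrix.one_apply_eq] at h2
      rw [← h2, gramM_apply]
    have h3 : w i j * w i j ≤ ∑ t, w i t * w i t :=
      Finset.single_le_sum (f := fun t => w i t * w i t)
        (fun t _ => mul_self_nonneg _) (Finset.mem_univ j)
    rw [h1] at h3
    rw [abs_le]
    constructor <;> nlinarith [h3]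
  have hM0 : 0 ≤ M := by
    have h1 := le_csSup hTbdd hT0
    obtain ⟨v2, hv2, hval2⟩ := scale_mem hp2 Ψ vfix (-1) (by rw [hvfixgram]; norm_num)
    have h2 := le_csSup hTbdd (show (-1 : ℝ) * Ψ vfix ∈ T from ⟨v2, hv2, hval2⟩)
    linarith
  have hMbd : ∀ v, |Ψ v| ≤ M * Real.sqrt (gramM v).det := fun v =>
    abs_le_sSup hp2 Ψ hTbdd v
  have hΦinj := phiIdx_injective J hJ
  set vone : Fin (q + 2) → Fin (n + 2) → ℝ := fun i => Pi.single (phiIdx n q J i) 1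
    with hvone
  have h1S : (1 : ℝ) ∈ S := by
    have hval1 : Φf vone = 1 := by
      rw [hΦdef, axisForm_apply]
      have hid : (mat vone).submatrix id (phiIdx n q J) = 1 := by
        ext s t
        simp only [Matrix.submatrix_apply, id_eq, mat, Matrix.of_apply, hvone]
        rw [Pi.single_apply]
        by_cases h : s = t
        · subst h
          rw [if_pos rfl, Matrix.one_apply_eq]
        · have hne : phiIdx n q J t ≠ phiIdx n q J s := fun hcon => h (hΦinj hcon).symm
          rw [if_neg hne, Matrix.one_apply_ne h]
      rw [hid, det_one]
    have hval2 : Ψ vone = 0 := by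
      rw [hΨdef, AlternatingMap.compLinearMap_apply]
      have hzero : (LinearMap.funLeft ℝ ℝ (Fin.castLE (Nat.le_add_right n 2)))
          (vone (Fin.last (q + 1))) = 0 := by
        funext j
        simp only [LinearMap.funLeft_apply, Function.comp_apply, hvone]
        rw [phiIdx_last, Pi.single_apply, if_neg]
        · rfl
        · intro hcon
          have h4 := congrArg Fin.val hcon
          simp only [Fin.coe_castLE] at h4
          have := j.isLt
          omega
      exact AlternatingMap.map_coord_zero _ (Fin.last (q + 1)) hzero
    refine ⟨vone, ?_, ?_⟩
    · rw [hvone, gram_single _ hΦinj, det_one]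
    · rw [AlternatingMap.add_apply, hval1, hval2, add_zero]
  have hUB : ∀ x ∈ S, x ≤ max 1 M := by
    rintro x ⟨v, hv, rfl⟩
    obtain ⟨w, hw, hvw⟩ := polar v hv
    rw [hvw]
    exact core n q J hJ ψ₀ M hM0 hMbd w hw
  have hSbdd : BddAbove S := ⟨max 1 M, hUB⟩
  have hSne : S.Nonempty := ⟨1, h1S⟩
  have hub : sSup S ≤ max 1 M := csSup_le hSne hUB
  have h1le : (1 : ℝ) ≤ sSup S := le_csSup hSbdd h1S
  have hMle : M ≤ sSup S := by
    rw [hMdef]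
    refine csSup_le hTne ?_
    rintro x ⟨v, hv, rfl⟩
    by_cases hc : Ψ v ≤ 1
    · linarith
    push_neg at hc
    set u := truncF n v with hudef
    have hψu : Ψ u = Ψ v := by
      rw [hΨdef, AlternatingMap.compLinearMap_apply, AlternatingMap.compLinearMap_apply]
      refine congrArg (⇑ψ₀) ?_
      funext i
      exact truncF_funLeft v i
    have hupsd : (gramM u).PosSemidef := gramM_psd u
    have hsub : (gramM v - gramM u).PosSemidef := by
      rw [hudef, truncF_gram]
      simp only [sub_sub_cancel]
      have h := Matrix.posSemidef_self_mul_conjTranspose ((mat v).submatrix id (rho n))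
      rwa [conjTranspose_eq_transpose_of_trivial] at h
    have hdle : (gramM u).det ≤ 1 := by
      have h2 := det_le_det hupsd hsub
      rwa [hv] at h2
    have hd0 : 0 ≤ (gramM u).det := psd_det_nonneg hupsd
    rcases eq_or_lt_of_le hd0 with h0 | hpos
    · have h2 := map_eq_zero_of_det_eq_zero Ψ u h0.symm
      rw [hψu] at h2
      linarith
    · set d := Real.sqrt (gramM u).det with hddef
      have hdpos : 0 < d := Real.sqrt_pos.2 hpos
      have hd1 : d ≤ 1 := by
        rw [hddef]
        calc Real.sqrt (gramM u).det ≤ Real.sqrt 1 := Real.sqrt_le_sqrt hdle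
          _ = 1 := Real.sqrt_one
      have hc2 : (d⁻¹) ^ 2 * (gramM u).det = 1 := by
        rw [hddef, sq, ← mul_inv, Real.mul_self_sqrt (le_of_lt hpos)]
        exact inv_mul_cancel₀ hpos.ne'
      obtain ⟨u', hu', hval'⟩ := scale_mem hp2 (Φf + Ψ) u d⁻¹ hc2
      have hval'' : (Φf + Ψ) u = Ψ v := by
        rw [AlternatingMap.add_apply, hψu]
        have hΦu : Φf u = 0 := by
          rw [hΦdef, axisForm_apply]
          apply Matrix.det_eq_zero_of_column_eq_zero (Fin.last (q + 1))
          intro s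
          simp only [Matrix.submatrix_apply, id_eq, mat, Matrix.of_apply]
          rw [phiIdx_last]
          simp [hudef, truncF]
        rw [hΦu, zero_add]
      have hmem : d⁻¹ * Ψ v ∈ S := ⟨u', hu', by rw [hval', hval'']⟩
      have hle2 := le_csSup hSbdd hmem
      have h5 : 1 ≤ d⁻¹ := by
        rw [← one_div, le_div_iff₀ hdpos, one_mul]
        exact hd1
      have h8 : Ψ v ≤ d⁻¹ * Ψ v := by
        have h9 : 0 ≤ (d⁻¹ - 1) * Ψ v := mul_nonneg (by linarith) (by linarith)
        linarith
      linarith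
  exact le_antisymm hub (max_le h1le hMle)
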